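/- Let P be a finite partial order, let A, B be maximal antichains of P, and let x ∈ A \ B. If M is a greatest lower bound of {A, B} and J is a least upper bound of {A, B} in (MA(P), ⊑), then exactly one of the following holds: x ∈ M, or x ∈ J. -/

import Mathlib

/-- A maximal antichain of a partial order: an antichain (w.r.t. `≤`) not properly
contained in any other antichain. -/
def MaxAntichain {α : Type*} [PartialOrder α] (A : Set α) : Prop :=
  IsAntichain (· ≤ ·) A ∧ ∀ B : Set α, IsAntichain (· ≤ ·) B → A ⊆ B → A = B

/-- The order `A ⊑ B` on maximal antichains: every element of `A` is below
some element of `B`. -/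
def MARel {α : Type*} [PartialOrder α] (A B : Set α) : Prop :=
  ∀ a ∈ A, ∃ b ∈ B, a ≤ b

lemma maxAntichain_comp {α : Type*} [PartialOrder α] {C : Set α} (hC : MaxAntichain C)
    (y : α) : ∃ c ∈ C, c ≤ y ∨ y ≤ c := by
  by_cases hy : y ∈ C
  · exact ⟨y, hy, Or.inl le_rfl⟩
  by_contra h
  push_neg at h
  have hanti : IsAntichain (· ≤ ·) (insert y C) := by
    intro a ha b hb hne hle
    rcases ha with rfl | ha
    · rcases hb with rfl | hb
      · exact hne rfl
      · exact (h b hb).2 hle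
    · rcases hb with rfl | hb
      · exact (h a ha).1 hle
      · exact hC.1 ha hb hne hle
  have heq := hC.2 _ hanti (Set.subset_insert y C)
  exact hy (heq.symm ▸ Set.mem_insert y C)

lemma marel_rev {α : Type*} [PartialOrder α] {C E : Set α} (hC : MaxAntichain C)
    (hE : MaxAntichain E) (h : MARel C E) : ∀ e ∈ E, ∃ c ∈ C, c ≤ e := by
  intro e he
  obtain ⟨c, hc, hce | hec⟩ := maxAntichain_comp hC e
  · exact ⟨c, hc, hce⟩
  · obtain ⟨e', he', hce'⟩ := h c hc
    have hee' : e = e' := by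
      by_contra hne
      exact hE.1 he he' hne (hec.trans hce')
    have : c = e := le_antisymm (hee'.symm ▸ hce') hec
    exact ⟨c, hc, this.le⟩

lemma dualMax {α : Type*} [PartialOrder α] {A : Set α} (hA : MaxAntichain A) :
    MaxAntichain (α := αᵒᵈ) A := by
  constructor
  · intro a ha b hb hne hle
    exact hA.1 hb ha hne.symm hle
  · intro E hE hsub
    have hE' : IsAntichain (fun a b : α => a ≤ b) (E : Set α) :=
      fun a ha b hb hne hle => hE hb ha hne.symm hle
    exact hA.2 E hE' hsub

lemma key {α : Type*} [Fintype α] [PartialOrder α] {A B M : Set α} {x b : α}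
    (hA : MaxAntichain A) (hB : MaxAntichain B) (hM : MaxAntichain M)
    (hMA : MARel M A)
    (hMglb : ∀ C : Set α, MaxAntichain C → MARel C A → MARel C B → MARel C M)
    (hxA : x ∈ A) (hb : b ∈ B) (hxb : x ≤ b) : x ∈ M := by
  set D : Set α := {y | (∃ a ∈ A, y ≤ a) ∧ ∃ b' ∈ B, y ≤ b'} with hD
  set M₀ : Set α := {m | m ∈ D ∧ ∀ z ∈ D, m ≤ z → m = z} with hM₀
  have hAD : ∀ a ∈ A, a ∈ D → a ∈ M₀ := by
    intro a ha haD
    refine ⟨haD, ?_⟩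
    intro z hz haz
    obtain ⟨a', ha', hza'⟩ := hz.1
    by_cases hne : a = a'
    · exact le_antisymm haz (hne ▸ hza')
    · exact absurd (haz.trans hza') (hA.1 ha ha' hne)
  have hBD : ∀ b' ∈ B, b' ∈ D → b' ∈ M₀ := by
    intro a ha haD
    refine ⟨haD, ?_⟩
    intro z hz haz
    obtain ⟨a', ha', hza'⟩ := hz.2
    by_cases hne : a = a'
    · exact le_antisymm haz (hne ▸ hza')
    · exact absurd (haz.trans hza') (hB.1 ha ha' hne)
  have hxM₀ : x ∈ M₀ := hAD x hxA ⟨⟨x, hxA, le_rfl⟩, ⟨b, hb, hxb⟩⟩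
  have hcomp : ∀ y : α, ∃ m ∈ M₀, m ≤ y ∨ y ≤ m := by
    intro y
    by_cases hyD : y ∈ D
    · have hfin : ({z ∈ D | y ≤ z}).Finite := Set.toFinite _
      obtain ⟨m, hm, hmax⟩ :=
        Set.Finite.exists_maximalFor id _ hfin ⟨y, hyD, le_rfl⟩
      refine ⟨m, ⟨hm.1, ?_⟩, Or.inr hm.2⟩
      intro z hz hmz
      exact le_antisymm hmz (hmax ⟨hz, hm.2.trans hmz⟩ hmz)
    · simp only [hD, Set.mem_setOf_eq, not_and_or] at hyD
      rcases hyD with h1 | h2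
      · push_neg at h1
        obtain ⟨a, ha, hay | hya⟩ := maxAntichain_comp hA y
        · obtain ⟨b', hb', hba | hab⟩ := maxAntichain_comp hB a
          · exact ⟨b', hBD b' hb' ⟨⟨a, ha, hba⟩, ⟨b', hb', le_rfl⟩⟩,
              Or.inl (hba.trans hay)⟩
          · exact ⟨a, hAD a ha ⟨⟨a, ha, le_rfl⟩, ⟨b', hb', hab⟩⟩, Or.inl hay⟩
        · exact absurd hya (h1 a ha)
      · push_neg at h2
        obtain ⟨b', hb', hby | hyb⟩ := maxAntichain_comp hB y
        · obtain ⟨a, ha, hab | hba⟩ := maxAntichain_comp hA b'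
          · exact ⟨a, hAD a ha ⟨⟨a, ha, le_rfl⟩, ⟨b', hb', hab⟩⟩,
              Or.inl (hab.trans hby)⟩
          · exact ⟨b', hBD b' hb' ⟨⟨a, ha, hba⟩, ⟨b', hb', le_rfl⟩⟩, Or.inl hby⟩
        · exact absurd hyb (h2 b' hb')
  have hM₀max : MaxAntichain M₀ := by
    constructor
    · intro m₁ h₁ m₂ h₂ hne hle
      exact hne (h₁.2 m₂ h₂.1 hle)
    · intro E hE hsub
      apply Set.Subset.antisymm hsub
      intro y hy
      obtain ⟨m, hm, hcmp⟩ := hcomp y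
      by_cases hne : y = m
      · exact hne ▸ hm
      · cases hcmp with
        | inl h => exact absurd h (hE (hsub hm) hy (fun e => hne e.symm))
        | inr h => exact absurd h (hE hy (hsub hm) hne)
  have relA : MARel M₀ A := fun m hm => hm.1.1
  have relB : MARel M₀ B := fun m hm => hm.1.2
  obtain ⟨m', hm', hxm'⟩ := hMglb M₀ hM₀max relA relB x hxM₀
  obtain ⟨m, hm, hmx⟩ := marel_rev hM hA hMA x hxA
  have hmm' : m = m' := by
    by_contra hne
    exact hM.1 hm hm' hne (hmx.trans hxm')
  have hxm : x = m := le_antisymm (hmm'.symm ▸ hxm') hmx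
  exact hxm ▸ hm

theorem stmt8 {α : Type*} [Fintype α] [PartialOrder α] (A B M J : Set α) (x : α)
    (hA : MaxAntichain A) (hB : MaxAntichain B)
    (hM : MaxAntichain M) (hJ : MaxAntichain J)
    (hMA : MARel M A) (hMB : MARel M B)
    (hMglb : ∀ C : Set α, MaxAntichain C → MARel C A → MARel C B → MARel C M)
    (hAJ : MARel A J) (hBJ : MARel B J)
    (hJlub : ∀ C : Set α, MaxAntichain C → MARel A C → MARel B C → MARel J C)
    (hx : x ∈ A \ B) :
    Xor' (x ∈ M) (x ∈ J) := by
  have notboth : ¬ (x ∈ M ∧ x ∈ J) := by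
    rintro ⟨hxM, hxJ⟩
    obtain ⟨b, hbB, hxb⟩ := hMB x hxM
    obtain ⟨j, hjJ, hbj⟩ := hBJ b hbB
    have hxj : x = j := by
      by_contra hne
      exact hJ.1 hxJ hjJ hne (hxb.trans hbj)
    have hxbeq : x = b := le_antisymm hxb (hxj ▸ hbj)
    exact hx.2 (hxbeq ▸ hbB)
  obtain ⟨b, hbB, hbx | hxb⟩ := maxAntichain_comp hB x
  · -- b ≤ x : x ∈ J, work in the dual order
    have hA' := dualMax hA
    have hB' := dualMax hB
    have hJ' := dualMax hJ
    have hJA : MARel (α := αᵒᵈ) J A := fun j hj => marel_rev hA hJ hAJ j hj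
    have hglb' : ∀ C : Set αᵒᵈ, MaxAntichain C → MARel C A → MARel C B →
        MARel (α := αᵒᵈ) C J := by
      intro C hC hCA hCB
      have hC' : MaxAntichain (α := α) C := dualMax (α := αᵒᵈ) hC
      have hAC : MARel A C := fun a ha => marel_rev (α := αᵒᵈ) hC hA' hCA a ha
      have hBC : MARel B C := fun a ha => marel_rev (α := αᵒᵈ) hC hB' hCB a ha
      have hJC := hJlub C hC' hAC hBC
      exact fun c hc => marel_rev hJ hC' hJC c hc
    have hxJ : x ∈ J :=
      key (α := αᵒᵈ) hA' hB' hJ' hJA hglb' hx.1 hbB hbx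
    exact Or.inr ⟨hxJ, fun hxM => notboth ⟨hxM, hxJ⟩⟩
  · have hxM : x ∈ M := key hA hB hM hMA hMglb hx.1 hbB hxb
    exact Or.inl ⟨hxM, fun hxJ => notboth ⟨hxM, hxJ⟩⟩
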